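/- Let R be a relational structure on a set E and let (E_x)_{x∈X} be a set partition of E. Then (E_x)_{x∈X} is a monomorphic decomposition of R if and only if each block E_x is a monomorphic part of R. -/

import Mathlib

/-- A relational structure on a base set (type) `E`: a family of finitary relations on `E`. -/
structure RelStruct (E : Type*) where
  ι : Type*
  arity : ι → ℕ
  rel : ∀ i : ι, (Fin (arity i) → E) → Prop

/-- The substructures induced by `R` on `A` and `B` are isomorphic: there is a bijection
`A ≃ B` transporting every relation of `R` restricted to `A` onto its restriction to `B`. -/
def RelStruct.Iso {E : Type*} (R : RelStruct E) (A B : Set E) : Prop :=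
  ∃ e : A ≃ B, ∀ (i : R.ι) (v : Fin (R.arity i) → A),
    R.rel i (fun j => (v j : E)) ↔ R.rel i (fun j => (e (v j) : E))

/-- `F` is a monomorphic part of `R`: any two finite subsets of the same cardinality which
agree outside `F` induce isomorphic substructures. -/
def IsMonoPart {E : Type*} (R : RelStruct E) (F : Set E) : Prop :=
  ∀ A A' : Set E, A.Finite → A'.Finite → A.ncard = A'.ncard → A \ F = A' \ F →
    R.Iso A A'

/-- A collection `P` of subsets of `E` (a set partition of `E`) is a monomorphic
decomposition of `R` if any two finite subsets meeting every block in the same number of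
elements induce isomorphic substructures. -/
def IsMonoDecomp {E : Type*} (R : RelStruct E) (P : Set (Set E)) : Prop :=
  ∀ A A' : Set E, A.Finite → A'.Finite →
    (∀ p ∈ P, (A ∩ p).ncard = (A' ∩ p).ncard) → R.Iso A A'

/-- Indexed variant: a family `(B x)_{x ∈ X}` of subsets of `E` is a monomorphic
decomposition of `R` if any two finite subsets meeting every block in the same number of
elements induce isomorphic substructures. -/
def IsMonoDecompFam {E : Type*} {X : Type*} (R : RelStruct E) (B : X → Set E) : Prop :=
  ∀ A A' : Set E, A.Finite → A'.Finite →
    (∀ x : X, (A ∩ B x).ncard = (A' ∩ B x).ncard) → R.Iso A A'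

/-- A set partition `(B x)_{x ∈ X}` of `E` is a monomorphic decomposition of a
relational structure `R` on `E` if and only if each block `B x` is a monomorphic part of `R`. -/
lemma RelStruct.Iso.refl' {E : Type*} (R : RelStruct E) (A : Set E) : R.Iso A A :=
  ⟨Equiv.refl A, fun _ _ => Iff.rfl⟩

lemma RelStruct.Iso.trans' {E : Type*} {R : RelStruct E} {A C D : Set E}
    (h1 : R.Iso A C) (h2 : R.Iso C D) : R.Iso A D := by
  obtain ⟨e, he⟩ := h1; obtain ⟨f, hf⟩ := h2
  exact ⟨e.trans f, fun i v => (he i v).trans (hf i fun j => e (v j))⟩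

theorem isMonoDecomp_iff_blocks_monoParts {E : Type*} {X : Type*} (R : RelStruct E)
    (B : X → Set E) (hpart : IndexedPartition B) :
    IsMonoDecompFam R B ↔ ∀ x : X, IsMonoPart R (B x) := by
  constructor
  · intro h x A A' hA hA' hcard hdiff
    apply h A A' hA hA'
    intro y
    rcases eq_or_ne y x with rfl | hyx
    · have h1 := Set.ncard_inter_add_ncard_diff_eq_ncard A (B y) hA
      have h2 := Set.ncard_inter_add_ncard_diff_eq_ncard A' (B y) hA'
      rw [hdiff] at h1
      omega
    · have key : ∀ (C : Set E), C ∩ B y = (C \ B x) ∩ B y := by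
        intro C
        ext a
        simp only [Set.mem_inter_iff, Set.mem_diff]
        exact ⟨fun ⟨h1, h2⟩ => ⟨⟨h1, fun hx => hyx (hpart.eq_of_mem h2 hx)⟩, h2⟩,
          fun ⟨⟨h1, _⟩, h2⟩ => ⟨h1, h2⟩⟩
      rw [key A, key A', hdiff]
  · intro h A A' hA hA' hcard
    classical
    -- induct on the number of blocks where A and A' differ
    set D := fun (A A' : Set E) => {x : X | A ∩ B x ≠ A' ∩ B x} with hD
    have hDfin : ∀ (A A' : Set E), A.Finite → A'.Finite → (D A A').Finite := by
      intro A A' hA hA'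
      have : D A A' ⊆ hpart.index '' (A ∪ A') := by
        intro x hx
        have : ((A ∪ A') ∩ B x).Nonempty := by
          by_contra hne
          rw [Set.not_nonempty_iff_eq_empty, Set.union_inter_distrib_right,
            Set.union_empty_iff] at hne
          exact hx (hne.1.trans hne.2.symm)
        obtain ⟨a, ha, hax⟩ := this
        exact ⟨a, ha, (hpart.eq_of_mem (hpart.mem_index a) hax)⟩
      exact ((hA.union hA').image _).subset this
    suffices H : ∀ n (A A' : Set E), A.Finite → A'.Finite →
        (∀ x : X, (A ∩ B x).ncard = (A' ∩ B x).ncard) → (D A A').ncard ≤ n →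
        R.Iso A A' by
      exact H (D A A').ncard A A' hA hA' hcard le_rfl
    clear hcard hA hA' A A'
    intro n
    induction n with
    | zero =>
      intro A A' hA hA' hcard hn
      have hDe : D A A' = ∅ := by
        rw [← Set.ncard_eq_zero (hDfin A A' hA hA')]; omega
      have : A = A' := by
        ext a
        have hx : hpart.index a ∉ D A A' := by rw [hDe]; exact Set.notMem_empty _
        have heq : A ∩ B (hpart.index a) = A' ∩ B (hpart.index a) := not_not.mp hx
        exact ⟨fun ha => (heq.subset ⟨ha, hpart.mem_index a⟩).1,
          fun ha => (heq.superset ⟨ha, hpart.mem_index a⟩).1⟩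
      rw [this]; exact RelStruct.Iso.refl' R A'
    | succ n ih =>
      intro A A' hA hA' hcard hn
      rcases Set.eq_empty_or_nonempty (D A A') with hDe | ⟨x, hx⟩
      · exact ih A A' hA hA' hcard (by rw [hDe, Set.ncard_empty]; omega)
      · set A'' := (A \ B x) ∪ (A' ∩ B x) with hA''def
        have hA''fin : A''.Finite := hA.diff.union (hA'.inter_of_left _)
        have e2 : A'' ∩ B x = A' ∩ B x := by
          ext a
          simp only [hA''def, Set.mem_inter_iff, Set.mem_union, Set.mem_diff]
          tauto
        have e3 : A'' \ B x = A \ B x := by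
          ext a
          simp only [hA''def, Set.mem_diff, Set.mem_union, Set.mem_inter_iff]
          tauto
        have hstep1 : R.Iso A A'' := by
          apply h x A A'' hA hA''fin
          · have e1 := Set.ncard_inter_add_ncard_diff_eq_ncard A (B x) hA
            have e4 := Set.ncard_inter_add_ncard_diff_eq_ncard A'' (B x) hA''fin
            rw [e2, e3] at e4
            have := hcard x
            omega
          · exact e3.symm
        have hblocks : ∀ y : X, A'' ∩ B y = if y = x then A' ∩ B y else A ∩ B y := by
          intro y
          rcases eq_or_ne y x with rfl | hyx
          · rw [if_pos rfl]; exact e2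
          · rw [if_neg hyx, hA''def, Set.union_inter_distrib_right]
            have h1 : A' ∩ B x ∩ B y = ∅ := by
              ext a; simp only [Set.mem_inter_iff, Set.mem_empty_iff_false, iff_false]
              rintro ⟨⟨-, h1⟩, h2⟩; exact hyx (hpart.eq_of_mem h2 h1)
            have h2 : (A \ B x) ∩ B y = A ∩ B y := by
              ext a; simp only [Set.mem_inter_iff, Set.mem_diff]
              exact ⟨fun ⟨⟨h1, _⟩, h2⟩ => ⟨h1, h2⟩,
                fun ⟨h1, h2⟩ => ⟨⟨h1, fun hb => hyx (hpart.eq_of_mem h2 hb)⟩, h2⟩⟩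
            rw [h1, h2, Set.union_empty]
        have hstep2 : R.Iso A'' A' := by
          apply ih A'' A' hA''fin hA'
          · intro y
            rw [hblocks y]
            rcases eq_or_ne y x with rfl | hyx
            · rw [if_pos rfl]
            · rw [if_neg hyx]; exact hcard y
          · have hsub : D A'' A' ⊆ D A A' \ {x} := by
              intro y hy
              simp only [hD, Set.mem_setOf_eq] at hy
              simp only [hD, Set.mem_setOf_eq, Set.mem_diff, Set.mem_singleton_iff]
              rw [hblocks y] at hy
              rcases eq_or_ne y x with rfl | hyx
              · rw [if_pos rfl] at hy; exact absurd rfl hy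
              · rw [if_neg hyx] at hy; exact ⟨hy, hyx⟩
            have := Set.ncard_le_ncard hsub (hDfin A A' hA hA').diff
            have hlt : (D A A' \ {x}).ncard < (D A A').ncard := by
              apply Set.ncard_lt_ncard _ (hDfin A A' hA hA')
              exact Set.sdiff_singleton_ssubset.mpr hx
            omega
        exact hstep1.trans' hstep2
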